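/- Tight positive cut-off of the filter protocol: for every n > 0, the filter protocol F_n with initial register value 0 and target s_n has a tight positive cut-off equal to n; that is, for every m ≥ n, Post*({⟨s_0^m, 0⟩}) ⊆ Pre*([s_n]) (so s_n is reached almost surely with m processes), while for m = n−1 this inclusion fails (indeed s_n is not reachable at all from ⟨s_0^{n−1}, 0⟩). -/

import Mathlib

/-- Operation type of a register protocol: read or write. -/
inductive Op : Type
  | R : Op
  | W : Op
deriving DecidableEq

instance instFintypeOp : Fintype Op :=
  ⟨{Op.R, Op.W}, by intro x; cases x <;> simp⟩

/-- A location has at least one outgoing transition. -/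
def Nonblock {Q D : Type*} (T : Set (Q × Op × D × Q)) : Prop :=
  ∀ q : Q, ∃ op d q', (q, op, d, q') ∈ T

/-- Whenever a read transition exists from `q`, reads of every datum are enabled in `q`. -/
def ReadTotal {Q D : Type*} (T : Set (Q × Op × D × Q)) : Prop :=
  ∀ q d' q', (q, Op.R, d', q') ∈ T → ∀ d : D, ∃ qd, (q, Op.R, d, qd) ∈ T

/-- One step of the distributed system associated with transition set `T`:
a configuration is a pair of a finite multiset of locations and a register datum. -/
def IsStep {Q D : Type*} [DecidableEq Q] (T : Set (Q × Op × D × Q)) :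
    Multiset Q × D → Multiset Q × D → Prop := fun γ γ' =>
  ∃ q op d'' q', (q, op, d'', q') ∈ T ∧ q ∈ γ.1 ∧
    γ'.1 = γ.1 - {q} + {q'} ∧
    ((op = Op.R ∧ γ.2 = d'' ∧ γ'.2 = d'') ∨ (op = Op.W ∧ γ'.2 = d''))

/-- Reachability: reflexive-transitive closure of the step relation. -/
def Reach {Q D : Type*} [DecidableEq Q] (T : Set (Q × Op × D × Q)) :
    Multiset Q × D → Multiset Q × D → Prop :=
  Relation.ReflTransGen (IsStep T)

/-- `PostStar T S` is the set of configurations reachable from some configuration of `S`. -/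
def PostStar {Q D : Type*} [DecidableEq Q] (T : Set (Q × Op × D × Q))
    (S : Set (Multiset Q × D)) : Set (Multiset Q × D) :=
  {γ' | ∃ γ ∈ S, Reach T γ γ'}

/-- `PreStar T S` is the set of configurations from which some configuration of `S`
is reachable. -/
def PreStar {Q D : Type*} [DecidableEq Q] (T : Set (Q × Op × D × Q))
    (S : Set (Multiset Q × D)) : Set (Multiset Q × D) :=
  {γ | ∃ γ' ∈ S, Reach T γ γ'}

/-- `[qf]`: configurations containing at least one process in location `qf`. -/
def TargetSet {Q D : Type*} [DecidableEq Q] (qf : Q) : Set (Multiset Q × D) :=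
  {γ | 0 < γ.1.count qf}

/-- The order `⪯` on configurations: same register content, same support,
and componentwise smaller multiset. -/
def ConfLE {Q D : Type*} [DecidableEq Q] (γ γ' : Multiset Q × D) : Prop :=
  γ.2 = γ'.2 ∧ γ.1.toFinset = γ'.1.toFinset ∧ γ.1 ≤ γ'.1

/-- Upward closure of a set of configurations with respect to `⪯`. -/
def UpSet {Q D : Type*} [DecidableEq Q] (B : Set (Multiset Q × D)) :
    Set (Multiset Q × D) :=
  {γ' | ∃ γ ∈ B, ConfLE γ γ'}

/-- Transitions of the filter protocol `F_n` (for `n > 0`): locations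
`s_0, …, s_n` are `Fin (n+1)`, data `0, …, n−1` are `Fin n`. Transitions:
`(s_0, W, 0, s_0)`; `(s_i, R, i, s_{i+1})` for `0 ≤ i ≤ n−1`;
`(s_i, W, i, s_0)` for `1 ≤ i ≤ n−1`; and read self-loops `(s, R, d, s)` for
every pair `(s, d)` for which no other read transition is specified. -/
def FilterT (n : ℕ) : Set (Fin (n + 1) × Op × Fin n × Fin (n + 1)) := fun t =>
  match t with
  | (s, Op.W, d, s') =>
      ((s : ℕ) = 0 ∧ (d : ℕ) = 0 ∧ (s' : ℕ) = 0) ∨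
      (1 ≤ (s : ℕ) ∧ (s : ℕ) ≤ n - 1 ∧ (d : ℕ) = (s : ℕ) ∧ (s' : ℕ) = 0)
  | (s, Op.R, d, s') =>
      ((s : ℕ) ≤ n - 1 ∧ (d : ℕ) = (s : ℕ) ∧ (s' : ℕ) = (s : ℕ) + 1) ∨
      (¬ ((s : ℕ) ≤ n - 1 ∧ (d : ℕ) = (s : ℕ)) ∧ s' = s)


namespace Stmt15Aux

lemma step_card {Q D : Type*} [DecidableEq Q] {T : Set (Q × Op × D × Q)}
    {γ γ' : Multiset Q × D} (h : IsStep T γ γ') :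
    Multiset.card γ'.1 = Multiset.card γ.1 := by
  obtain ⟨q, op, d'', q', _, hq, hμ, _⟩ := h
  have h1 : 0 < Multiset.card γ.1 := Multiset.card_pos_iff_exists_mem.2 ⟨q, hq⟩
  rw [hμ, Multiset.sub_singleton, Multiset.card_add, Multiset.card_erase_of_mem hq,
    Multiset.card_singleton]
  exact Nat.succ_pred_eq_of_pos h1

lemma reach_card {Q D : Type*} [DecidableEq Q] {T : Set (Q × Op × D × Q)}
    {γ γ' : Multiset Q × D} (h : Reach T γ γ') :
    Multiset.card γ'.1 = Multiset.card γ.1 := by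
  induction h with
  | refl => rfl
  | tail _ hstep ih => rw [step_card hstep, ih]

lemma stepR {Q D : Type*} [DecidableEq Q] {T : Set (Q × Op × D × Q)}
    {q q' : Q} {d : D} (h : (q, Op.R, d, q') ∈ T) {μ : Multiset Q} (hq : q ∈ μ) :
    IsStep T (μ, d) (μ - {q} + {q'}, d) :=
  ⟨q, Op.R, d, q', h, hq, rfl, Or.inl ⟨rfl, rfl, rfl⟩⟩

lemma stepW {Q D : Type*} [DecidableEq Q] {T : Set (Q × Op × D × Q)}
    {q q' : Q} {d' : D} (h : (q, Op.W, d', q') ∈ T) {μ : Multiset Q} (hq : q ∈ μ) (d : D) :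
    IsStep T (μ, d) (μ - {q} + {q'}, d') :=
  ⟨q, Op.W, d', q', h, hq, rfl, Or.inr ⟨rfl, rfl⟩⟩

lemma batch_read {Q D : Type*} [DecidableEq Q] {T : Set (Q × Op × D × Q)}
    {q q' : Q} {d : D} (h : (q, Op.R, d, q') ∈ T) :
    ∀ (c : ℕ) (A : Multiset Q),
      Reach T (A + Multiset.replicate c q, d) (A + Multiset.replicate c q', d) := by
  intro c
  induction c with
  | zero => intro A; exact Relation.ReflTransGen.refl
  | succ c ih =>
    intro A
    have hq : q ∈ A + Multiset.replicate (c + 1) q := by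
      simp [Multiset.mem_replicate]
    have h1 := stepR h hq
    have e : A + Multiset.replicate (c + 1) q - {q} + {q'}
        = (A + {q'}) + Multiset.replicate c q := by
      ext a
      simp [Multiset.count_sub, Multiset.count_replicate, Multiset.count_singleton,
        Multiset.count_cons]
      split_ifs <;> omega
    rw [e] at h1
    have h2 := ih (A + {q'})
    have e2 : (A + {q'}) + Multiset.replicate c q' = A + Multiset.replicate (c + 1) q' := by
      ext a
      simp [Multiset.count_replicate, Multiset.count_singleton, Multiset.count_cons]
      split_ifs <;> omega
    rw [e2] at h2
    exact Relation.ReflTransGen.head h1 h2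

end Stmt15Aux

namespace Stmt15Aux

/-- number of processes at location `≥ k`. -/
def cnt (n k : ℕ) (μ : Multiset (Fin (n + 1))) : ℕ :=
  Multiset.card (μ.filter (fun q : Fin (n + 1) => k ≤ (q : ℕ)))

lemma cnt_le_card (n k : ℕ) (μ : Multiset (Fin (n + 1))) :
    cnt n k μ ≤ Multiset.card μ :=
  Multiset.card_le_card (Multiset.filter_le _ _)

lemma cnt_mono {n : ℕ} {k k' : ℕ} (h : k ≤ k') (μ : Multiset (Fin (n + 1))) :
    cnt n k' μ ≤ cnt n k μ :=
  Multiset.card_le_card (Multiset.monotone_filter_right μ (fun _ hb => le_trans h hb))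

lemma cnt_cons (n k : ℕ) (q : Fin (n + 1)) (μ : Multiset (Fin (n + 1))) :
    cnt n k (q ::ₘ μ) = cnt n k μ + (if k ≤ (q : ℕ) then 1 else 0) := by
  unfold cnt
  rw [Multiset.filter_cons]
  split_ifs with h <;> simp [h]

lemma cnt_swap {n k : ℕ} {μ : Multiset (Fin (n + 1))} {q q' : Fin (n + 1)} (hq : q ∈ μ) :
    cnt n k (μ - {q} + {q'}) + (if k ≤ (q : ℕ) then 1 else 0)
      = cnt n k μ + (if k ≤ (q' : ℕ) then 1 else 0) := by
  have e : μ - {q} + {q'} = q' ::ₘ μ.erase q := by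
    rw [Multiset.sub_singleton]
    ext a
    simp only [Multiset.count_add, Multiset.count_cons, Multiset.count_singleton]
  rw [e, cnt_cons]
  have h1 := cnt_cons n k q (μ.erase q)
  rw [Multiset.cons_erase hq] at h1
  rw [h1]
  ring

lemma cnt_succ_lt {n i : ℕ} {μ : Multiset (Fin (n + 1))} {q : Fin (n + 1)}
    (hq : q ∈ μ) (hv : (q : ℕ) = i) : cnt n (i + 1) μ + 1 ≤ cnt n i μ := by
  have h1 := cnt_cons n i q (μ.erase q)
  have h2 := cnt_cons n (i + 1) q (μ.erase q)
  rw [Multiset.cons_erase hq] at h1 h2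
  rw [hv, if_pos (le_refl i)] at h1
  rw [hv, if_neg (by omega)] at h2
  have h3 := cnt_mono (show i ≤ i + 1 by omega) (μ.erase q)
  omega

/-- The invariant: `m` processes, and for each `k ≥ 1`,
`#{processes at ≥ k} + [register ≥ k] ≤ m + 1 - k`. -/
def Inv (n m : ℕ) (γ : Multiset (Fin (n + 1)) × Fin n) : Prop :=
  Multiset.card γ.1 = m ∧
    ∀ k, 1 ≤ k → cnt n k γ.1 + (if k ≤ (γ.2 : ℕ) then 1 else 0) ≤ m + 1 - k

lemma inv_step {n m : ℕ} {γ γ' : Multiset (Fin (n + 1)) × Fin n}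
    (hstep : IsStep (FilterT n) γ γ') (hinv : Inv n m γ) : Inv n m γ' := by
  obtain ⟨hcard, hbound⟩ := hinv
  have hcard' : Multiset.card γ'.1 = m := by rw [step_card hstep, hcard]
  refine ⟨hcard', ?_⟩
  obtain ⟨q, op, d'', q', hT, hq, hμ, hop⟩ := hstep
  intro k hk
  have hswap := fun k => cnt_swap (n := n) (k := k) (q' := q') hq
  rw [← hμ] at hswap
  cases op with
  | R =>
    rcases hop with ⟨-, hreg, hreg'⟩ | ⟨h, -⟩
    · rcases hT with ⟨hs, hd, hs'⟩ | ⟨-, hself⟩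
      · -- advance: q'.val = q.val + 1, register = d'' with d''.val = q.val
        have hki : (γ'.2 : ℕ) = (q : ℕ) := by rw [hreg']; exact hd
        have hgi : (γ.2 : ℕ) = (q : ℕ) := by rw [hreg]; exact hd
        have hsw := hswap k
        rw [hs'] at hsw
        have hb := hbound k hk
        rw [hgi] at hb
        rw [hki]
        rcases lt_trichotomy k ((q : ℕ) + 1) with hlt | heq | hgt
        · split_ifs at hsw hb ⊢ <;> omega
        · subst heq
          by_cases hi0 : (q : ℕ) = 0
          · have h1 := cnt_le_card n ((q : ℕ) + 1) γ'.1
            rw [hcard'] at h1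
            split_ifs at hsw ⊢ <;> omega
          · have hbi := hbound (q : ℕ) (by omega)
            rw [hgi] at hbi
            have hlt2 := cnt_succ_lt hq rfl
            split_ifs at hsw hbi ⊢ <;> omega
        · split_ifs at hsw hb ⊢ <;> omega
      · -- self loop
        subst hself
        have hsw := hswap k
        have hb := hbound k hk
        have hreg2 : (γ'.2 : ℕ) = (γ.2 : ℕ) := by rw [hreg, hreg']
        rw [hreg2]
        split_ifs at hsw hb ⊢ <;> omega
    · exact absurd h (by simp)
  | W =>
    rcases hop with ⟨h, -⟩ | ⟨-, hreg'⟩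
    · exact absurd h (by simp)
    rcases hT with ⟨hs, hd, hs'⟩ | ⟨hs1, hs2, hd, hs'⟩
    · -- write 0 at s_0
      have hsw := hswap k
      rw [hs, hs'] at hsw
      have h0 : (γ'.2 : ℕ) = 0 := by rw [hreg']; exact hd
      rw [h0]
      have hb := hbound k hk
      split_ifs at hsw hb ⊢ <;> omega
    · -- write i at s_i, drop to s_0
      have hsw := hswap k
      rw [hs'] at hsw
      have h0 : (γ'.2 : ℕ) = (q : ℕ) := by rw [hreg']; exact hd
      rw [h0]
      have hb := hbound k hk
      split_ifs at hsw hb ⊢ <;> omega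

lemma inv_reach {n m : ℕ} {γ γ' : Multiset (Fin (n + 1)) × Fin n}
    (h : Reach (FilterT n) γ γ') (hinv : Inv n m γ) : Inv n m γ' := by
  induction h with
  | refl => exact hinv
  | tail _ hstep ih => exact inv_step hstep ih

end Stmt15Aux

namespace Stmt15Aux

def s0 {n : ℕ} : Fin (n + 1) := ⟨0, Nat.succ_pos n⟩

lemma mem_w0 (n : ℕ) (hn : 0 < n) :
    ((s0 : Fin (n + 1)), Op.W, (⟨0, hn⟩ : Fin n), (s0 : Fin (n + 1))) ∈ FilterT n :=
  Or.inl ⟨rfl, rfl, rfl⟩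

lemma mem_wi (n : ℕ) {q : Fin (n + 1)} (h1 : 1 ≤ (q : ℕ)) (h2 : (q : ℕ) ≤ n - 1)
    (hd : (q : ℕ) < n) :
    (q, Op.W, (⟨(q : ℕ), hd⟩ : Fin n), (s0 : Fin (n + 1))) ∈ FilterT n :=
  Or.inr ⟨h1, h2, rfl, rfl⟩

lemma mem_ri (n i : ℕ) (hi : i < n) :
    ((⟨i, by omega⟩ : Fin (n + 1)), Op.R, (⟨i, hi⟩ : Fin n),
      (⟨i + 1, by omega⟩ : Fin (n + 1))) ∈ FilterT n :=
  Or.inl ⟨show i ≤ n - 1 by omega, rfl, rfl⟩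

/-- From a configuration all of whose processes are at `s0`, one write resets
the register to `0`. -/
lemma reset0 (n : ℕ) (hn : 0 < n) (μ : Multiset (Fin (n + 1))) (dd : Fin n)
    (hall : ∀ q ∈ μ, q = (s0 : Fin (n + 1))) (hpos : 0 < Multiset.card μ) :
    Reach (FilterT n) (μ, dd)
      (Multiset.replicate (Multiset.card μ) (s0 : Fin (n + 1)), (⟨0, hn⟩ : Fin n)) := by
  have hμ : μ = Multiset.replicate (Multiset.card μ) (s0 : Fin (n + 1)) :=
    Multiset.eq_replicate_card.2 hall
  have hq0 : (s0 : Fin (n + 1)) ∈ μ := by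
    obtain ⟨q, hqμ⟩ := Multiset.card_pos_iff_exists_mem.1 hpos
    rwa [hall q hqμ] at hqμ
  have hstep := stepW (mem_w0 n hn) hq0 dd
  have e : μ - {(s0 : Fin (n + 1))} + {(s0 : Fin (n + 1))} = μ := by
    rw [Multiset.sub_singleton, add_comm (μ.erase (s0 : Fin (n + 1))) {(s0 : Fin (n + 1))},
      Multiset.singleton_add, Multiset.cons_erase hq0]
  rw [e] at hstep
  exact Relation.ReflTransGen.single (by rw [← hμ]; exact hstep)

/-- Every configuration with no process at `s_n` can be reset to all-`s0`,
register `0`. -/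
lemma reset (n : ℕ) (hn : 0 < n) :
    ∀ (B : ℕ) (μ : Multiset (Fin (n + 1))) (dd : Fin n),
      Multiset.card (μ.filter (fun q : Fin (n + 1) => (q : ℕ) ≠ 0)) ≤ B →
      (∀ q ∈ μ, (q : ℕ) < n) → 0 < Multiset.card μ →
      Reach (FilterT n) (μ, dd)
        (Multiset.replicate (Multiset.card μ) (s0 : Fin (n + 1)), (⟨0, hn⟩ : Fin n)) := by
  intro B
  induction B with
  | zero =>
    intro μ dd hB hlt hpos
    refine reset0 n hn μ dd ?_ hpos
    intro q hqμ
    by_contra hne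
    have hvq : (q : ℕ) ≠ 0 := fun h => hne (Fin.ext h)
    have hmem : q ∈ μ.filter (fun q : Fin (n + 1) => (q : ℕ) ≠ 0) :=
      Multiset.mem_filter.2 ⟨hqμ, hvq⟩
    have := Multiset.card_pos_iff_exists_mem.2 ⟨q, hmem⟩
    omega
  | succ B ih =>
    intro μ dd hB hlt hpos
    by_cases hE : ∃ q ∈ μ, (q : ℕ) ≠ 0
    · obtain ⟨q, hqμ, hq0⟩ := hE
      have hqn : (q : ℕ) < n := hlt q hqμ
      have hstep := stepW (mem_wi n (by omega) (by omega) hqn) hqμ dd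
      have hcardμ : 0 < Multiset.card μ := hpos
      have hcard : Multiset.card (μ - {q} + {(s0 : Fin (n + 1))}) = Multiset.card μ := by
        rw [Multiset.sub_singleton, Multiset.card_add, Multiset.card_erase_of_mem hqμ,
          Multiset.card_singleton, Nat.pred_eq_sub_one]
        omega
      have e1 : μ.filter (fun q : Fin (n + 1) => (q : ℕ) ≠ 0)
          = q ::ₘ (μ.erase q).filter (fun q : Fin (n + 1) => (q : ℕ) ≠ 0) := by
        conv_lhs => rw [← Multiset.cons_erase hqμ]
        rw [Multiset.filter_cons_of_pos (p := fun q : Fin (n + 1) => (q : ℕ) ≠ 0) (μ.erase q) hq0]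
      have e2 : (μ - {q} + {(s0 : Fin (n + 1))}).filter (fun q : Fin (n + 1) => (q : ℕ) ≠ 0)
          = (μ.erase q).filter (fun q : Fin (n + 1) => (q : ℕ) ≠ 0) := by
        rw [Multiset.sub_singleton, Multiset.filter_add, Multiset.filter_singleton,
          if_neg (by simp [s0])]
        simp
      have hB' : Multiset.card ((μ - {q} + {(s0 : Fin (n + 1))}).filter
          (fun q : Fin (n + 1) => (q : ℕ) ≠ 0)) ≤ B := by
        rw [e2]
        rw [e1, Multiset.card_cons] at hB
        omega
      have hlt' : ∀ p ∈ μ - {q} + {(s0 : Fin (n + 1))}, (p : ℕ) < n := by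
        intro p hp
        rcases Multiset.mem_add.1 hp with hp | hp
        · rw [Multiset.sub_singleton] at hp
          exact hlt p (Multiset.mem_of_mem_erase hp)
        · rw [Multiset.mem_singleton] at hp
          subst hp
          exact hn
      have hpos' : 0 < Multiset.card (μ - {q} + {(s0 : Fin (n + 1))}) := by omega
      have htail := ih (μ - {q} + {(s0 : Fin (n + 1))}) ⟨(q : ℕ), hqn⟩ hB' hlt' hpos'
      rw [hcard] at htail
      exact Relation.ReflTransGen.head hstep htail
    · refine reset0 n hn μ dd ?_ hpos
      intro p hp
      push_neg at hE
      exact Fin.ext (hE p hp)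

/-- The climb: with `m ≥ n` processes, from all-`s0` register `0` one reaches,
for each `i < n`, the configuration `s0^i + s_{i+1}^{m-i}` with register `i`. -/
lemma climb (n m : ℕ) (hn : 0 < n) (hm : n ≤ m) :
    ∀ i, (hi : i < n) →
      Reach (FilterT n) (Multiset.replicate m (s0 : Fin (n + 1)), (⟨0, hn⟩ : Fin n))
        (Multiset.replicate i (s0 : Fin (n + 1))
            + Multiset.replicate (m - i) (⟨i + 1, by omega⟩ : Fin (n + 1)),
          (⟨i, hi⟩ : Fin n)) := by
  intro i
  induction i with
  | zero =>
    intro hi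
    have h := batch_read (mem_ri n 0 hi) m (0 : Multiset (Fin (n + 1)))
    rw [zero_add, zero_add] at h
    have e : Multiset.replicate (0:ℕ) (s0 : Fin (n + 1))
        + Multiset.replicate (m - 0) (⟨0 + 1, by omega⟩ : Fin (n + 1))
        = Multiset.replicate m (⟨0 + 1, by omega⟩ : Fin (n + 1)) := by
      rw [Multiset.replicate_zero, zero_add, Nat.sub_zero]
    rw [e]
    exact h
  | succ i ihc =>
    intro hi
    have hi' : i < n := by omega
    have IH := ihc hi'
    have hq : (⟨i + 1, by omega⟩ : Fin (n + 1)) ∈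
        Multiset.replicate i (s0 : Fin (n + 1))
          + Multiset.replicate (m - i) (⟨i + 1, by omega⟩ : Fin (n + 1)) := by
      refine Multiset.mem_add.2 (Or.inr ?_)
      rw [Multiset.mem_replicate]
      exact ⟨by omega, rfl⟩
    have hw := stepW (mem_wi n (q := ⟨i + 1, by omega⟩) (by exact Nat.le_add_left 1 i)
      (show i + 1 ≤ n - 1 by omega) (show i + 1 < n by omega)) hq (⟨i, hi'⟩ : Fin n)
    have e1 : Multiset.replicate i (s0 : Fin (n + 1))
          + Multiset.replicate (m - i) (⟨i + 1, by omega⟩ : Fin (n + 1))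
          - {(⟨i + 1, by omega⟩ : Fin (n + 1))} + {(s0 : Fin (n + 1))}
        = Multiset.replicate (i + 1) (s0 : Fin (n + 1))
          + Multiset.replicate (m - i - 1) (⟨i + 1, by omega⟩ : Fin (n + 1)) := by
      ext a
      simp only [Multiset.count_add, Multiset.count_sub, Multiset.count_replicate,
        Multiset.count_singleton, s0, Fin.ext_iff]
      split_ifs <;> omega
    rw [e1] at hw
    have hr := batch_read (mem_ri n (i + 1) hi) (m - i - 1)
      (Multiset.replicate (i + 1) (s0 : Fin (n + 1)))
    exact IH.trans (Relation.ReflTransGen.head hw hr)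

end Stmt15Aux

/-- tight positive cut-off of the filter protocol: for every
`m ≥ n`, `Post*({⟨s_0^m, 0⟩}) ⊆ Pre*([s_n])` (so `s_n` is reached almost surely
with `m` processes), while with `n − 1` processes `s_n` is not reachable at all:
`⟨s_0^{n−1}, 0⟩ ∉ Pre*([s_n])`. -/
theorem stmt_15 (n : ℕ) (hn : 0 < n) :
    (∀ m : ℕ, n ≤ m →
      PostStar (FilterT n)
          {(Multiset.replicate m (⟨0, by omega⟩ : Fin (n + 1)), (⟨0, hn⟩ : Fin n))} ⊆
        PreStar (FilterT n) (TargetSet (Fin.last n))) ∧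
    (Multiset.replicate (n - 1) (⟨0, by omega⟩ : Fin (n + 1)), (⟨0, hn⟩ : Fin n)) ∉
      PreStar (FilterT n) (TargetSet (Fin.last n)) := by
  constructor
  · -- positive part
    intro m hm γ hγ
    obtain ⟨γ0, hγ0, hreach⟩ := hγ
    rw [Set.mem_singleton_iff] at hγ0
    subst hγ0
    have hcard : Multiset.card γ.1 = m := by
      simpa using Stmt15Aux.reach_card hreach
    by_cases hlast : Fin.last n ∈ γ.1
    · exact ⟨γ, Multiset.count_pos.2 hlast, Relation.ReflTransGen.refl⟩
    · have hall : ∀ q ∈ γ.1, (q : ℕ) < n := by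
        intro q hqμ
        have h1 : (q : ℕ) ≤ n := Fin.is_le q
        rcases Nat.lt_or_ge (q : ℕ) n with h | h
        · exact h
        · exfalso
          apply hlast
          have hqq : q = Fin.last n := Fin.ext (by rw [Fin.val_last]; omega)
          rwa [← hqq]
      have h1 := Stmt15Aux.reset n hn _ γ.1 γ.2 (le_refl _) hall (by omega)
      rw [hcard] at h1
      have h2 := Stmt15Aux.climb n m hn hm (n - 1) (by omega)
      refine ⟨_, ?_, Relation.ReflTransGen.trans h1 h2⟩
      refine Multiset.count_pos.2 (Multiset.mem_add.2 (Or.inr ?_))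
      rw [Multiset.mem_replicate]
      refine ⟨by omega, Fin.ext ?_⟩
      rw [Fin.val_last]
      show n = n - 1 + 1
      omega
  · -- negative part
    intro h
    obtain ⟨γ', htar, hreach⟩ := h
    have hinv0 : Stmt15Aux.Inv n (n - 1)
        (Multiset.replicate (n - 1) (⟨0, by omega⟩ : Fin (n + 1)), (⟨0, hn⟩ : Fin n)) := by
      constructor
      · simp
      · intro k hk
        have hc : Stmt15Aux.cnt n k
            (Multiset.replicate (n - 1) (⟨0, by omega⟩ : Fin (n + 1))) = 0 := by
          unfold Stmt15Aux.cnt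
          rw [Multiset.card_eq_zero, Multiset.filter_eq_nil]
          intro a ha
          rw [Multiset.eq_of_mem_replicate ha]
          show ¬ k ≤ 0
          omega
        show Stmt15Aux.cnt n k _ + _ ≤ _
        rw [hc, if_neg (show ¬ k ≤ ((⟨0, hn⟩ : Fin n) : ℕ) by
          show ¬ k ≤ 0; omega)]
        omega
    have hinv := Stmt15Aux.inv_reach hreach hinv0
    obtain ⟨-, hbound⟩ := hinv
    have hb := hbound n hn
    have hmem : Fin.last n ∈ γ'.1 := Multiset.count_pos.1 htar
    have h1 : 1 ≤ Stmt15Aux.cnt n n γ'.1 := by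
      refine Multiset.card_pos_iff_exists_mem.2 ⟨Fin.last n, Multiset.mem_filter.2 ⟨hmem, ?_⟩⟩
      show n ≤ (Fin.last n : ℕ)
      rw [Fin.val_last]
    have hb2 : Stmt15Aux.cnt n n γ'.1 ≤ n - 1 + 1 - n := le_trans (Nat.le_add_right _ _) hb
    omega
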